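/- Suppose a payment vector Q_1,…,Q_n satisfies the adjacent-path difference equations Q_{i+1} − Q_i = (T_i − T_{i+1})·β_i for every i = 1,…,n−1, together with revenue neutrality ρ_1·Q_1 + ⋯ + ρ_n·Q_n = 0. Then Q_i = P_i for every i = 1,…,n, where P is the UBCS payment. -/

import Mathlib

open Finset

/-- Any payment vector satisfying the adjacent-path difference equations and revenue
neutrality coincides with the UBCS payment. -/
theorem ubcs_unique_adjacent
    (n : ℕ) (hn : 1 ≤ n)
    (T β ρ P : ℕ → ℝ)
    (hT : ∀ i j, 1 ≤ i → i ≤ j → j ≤ n → T j ≤ T i)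
    (hβ0 : 0 ≤ β 0)
    (hβ : ∀ i j, i ≤ j → j ≤ n → β i ≤ β j)
    (hρ : ∀ i, 1 ≤ i → i ≤ n → 0 ≤ ρ i)
    (hρ1 : ∑ h ∈ Icc 1 n, ρ h = 1)
    (hP : ∀ i, 1 ≤ i → i ≤ n →
      P i = ∑ h ∈ Icc 1 (i - 1), ρ h * ∑ g ∈ Icc (h + 1) i, (T (g - 1) - T g) * β (g - 1)
          - ∑ h ∈ Icc (i + 1) n, ρ h * ∑ g ∈ Icc (i + 1) h, (T (g - 1) - T g) * β (g - 1))
    (Q : ℕ → ℝ)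
    (hadj : ∀ i, 1 ≤ i → i + 1 ≤ n → Q (i + 1) - Q i = (T i - T (i + 1)) * β i)
    (hRN : ∑ h ∈ Icc 1 n, ρ h * Q h = 0) :
    ∀ i, 1 ≤ i → i ≤ n → Q i = P i := by
  set D : ℕ → ℝ := fun g => (T (g - 1) - T g) * β (g - 1) with hDdef
  -- Q i = Q 1 + sum of increments
  have key : ∀ i, 1 ≤ i → i ≤ n → Q i = Q 1 + ∑ g ∈ Ioc 1 i, D g := by
    intro i hi hin
    induction i with
    | zero => omega
    | succ k ih =>
      rcases Nat.lt_or_ge k 1 with h | h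
      · have : k = 0 := by omega
        subst this; simp
      · have ihk := ih h (by omega)
        have hstep : Q (k + 1) = Q k + D (k + 1) := by
          have h2 := hadj k h (by omega)
          have : D (k + 1) = (T k - T (k + 1)) * β k := by
            simp [hDdef]
          linarith
        rw [hstep, ihk, Finset.sum_Ioc_succ_top (by omega : 1 ≤ k)]
        ring
  -- difference formula
  have diff : ∀ h i, 1 ≤ h → h ≤ i → i ≤ n →
      Q i - Q h = ∑ g ∈ Icc (h + 1) i, D g := by
    intro h i hh hhi hin
    rw [key i (le_trans hh hhi) hin, key h hh (le_trans hhi hin)]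
    rw [← Finset.sum_Ioc_consecutive D (by omega : 1 ≤ h) hhi]
    rw [Finset.Icc_add_one_left_eq_Ioc]
    ring
  intro i hi hin
  -- express Q i as weighted sum of differences
  have hQ : Q i = ∑ h ∈ Icc 1 n, ρ h * (Q i - Q h) := by
    have : ∑ h ∈ Icc 1 n, ρ h * (Q i - Q h)
        = (∑ h ∈ Icc 1 n, ρ h) * Q i - ∑ h ∈ Icc 1 n, ρ h * Q h := by
      rw [Finset.sum_mul, ← Finset.sum_sub_distrib]
      congr 1; ext h; ring
    rw [this, hρ1, hRN]; ring
  -- split the sum at i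
  have hsplit : ∑ h ∈ Icc 1 n, ρ h * (Q i - Q h)
      = ∑ h ∈ Icc 1 (i - 1), ρ h * (Q i - Q h) + ρ i * (Q i - Q i)
        + ∑ h ∈ Icc (i + 1) n, ρ h * (Q i - Q h) := by
    have e1 : Icc 1 n = Ioc 0 n := by rw [← Finset.Icc_add_one_left_eq_Ioc, zero_add]
    have e2 : Icc 1 (i - 1) = Ioc 0 (i - 1) := by rw [← Finset.Icc_add_one_left_eq_Ioc, zero_add]
    have e3 : Icc (i + 1) n = Ioc i n := by rw [← Finset.Icc_add_one_left_eq_Ioc]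
    rw [e1, e2, e3]
    rw [← Finset.sum_Ioc_consecutive _ (by omega : 0 ≤ i) hin]
    rw [← Finset.sum_Ioc_consecutive _ (by omega : (0:ℕ) ≤ i - 1) (by omega : i - 1 ≤ i)]
    have : Ioc (i - 1) i = {i} := by
      ext x; simp only [Finset.mem_Ioc, Finset.mem_singleton]; omega
    rw [this, Finset.sum_singleton]
  rw [hP i hi hin, hQ, hsplit]
  have h1 : ∑ h ∈ Icc 1 (i - 1), ρ h * (Q i - Q h)
      = ∑ h ∈ Icc 1 (i - 1), ρ h * ∑ g ∈ Icc (h + 1) i, D g := by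
    apply Finset.sum_congr rfl
    intro h hh
    simp only [Finset.mem_Icc] at hh
    rw [diff h i hh.1 (by omega) hin]
  have h2 : ∑ h ∈ Icc (i + 1) n, ρ h * (Q i - Q h)
      = -∑ h ∈ Icc (i + 1) n, ρ h * ∑ g ∈ Icc (i + 1) h, D g := by
    rw [← Finset.sum_neg_distrib]
    apply Finset.sum_congr rfl
    intro h hh
    simp only [Finset.mem_Icc] at hh
    have := diff i h hi (by omega) hh.2
    have hqi : Q i - Q h = -∑ g ∈ Icc (i + 1) h, D g := by linarith
    rw [hqi]; ring
  rw [h1, h2]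
  ring
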